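/- Let p be a prime and let A be an F-finite Noetherian integral domain of characteristic p. Suppose there exists a nonzero element c ∈ A such that (i) the localization A[1/c] is strongly F-regular, and (ii) there exist e ≥ 0 and an additive map ψ : A → A with ψ(r^{p^e}·x) = r·ψ(x) for all r, x ∈ A and ψ(c·a^{p^e}) = a for all a ∈ A. Then A is strongly F-regular. (This is the ring-theoretic content of criterion 3 ⇒ 4 in Smith's theorem on global F-regularity, used to deduce that an F-regular Schubert variety admitting a Frobenius splitting along an ample divisor is globally F-regular.) -/

import Mathlib

/-- `A` is strongly `F`-regular with respect to the prime `p`: for every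
non-zerodivisor `c` there are `e ≥ 0` and an additive map `ψ : A → A` which is
`A`-linear for the `A`-action on the source restricted along the `e`-th Frobenius
power and splits `a ↦ c * a ^ p ^ e`. -/
def IsStronglyFRegular (p : ℕ) (A : Type*) [CommRing A] : Prop :=
  ∀ c : A, (∀ x : A, c * x = 0 → x = 0) →
    ∃ (e : ℕ) (ψ : A →+ A),
      (∀ r x : A, ψ (r ^ p ^ e * x) = r * ψ x) ∧
      ∀ a : A, ψ (c * a ^ p ^ e) = a

/-- `A` is `F`-finite: the Frobenius endomorphism `a ↦ a ^ p` is a finite ring map. -/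
def IsFFinite (p : ℕ) (A : Type*) [CommRing A] [ExpChar A p] : Prop :=
  (frobenius A p).Finite

section Aux

/-- Iterate of an additive map. -/
private def psiIter {A : Type*} [CommRing A] (ψ : A →+ A) : ℕ → A → A
  | 0 => id
  | m + 1 => fun x => psiIter ψ m (ψ x)

/-- The exponent sequence `s 0 = 0`, `s (m+1) = 1 + q * s m`. -/
private def sExp (q : ℕ) : ℕ → ℕ
  | 0 => 0
  | m + 1 => 1 + q * sExp q m

private lemma psiIter_add {A : Type*} [CommRing A] (ψ : A →+ A) :
    ∀ (m : ℕ) (x y : A), psiIter ψ m (x + y) = psiIter ψ m x + psiIter ψ m y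
  | 0, x, y => rfl
  | m + 1, x, y => by
    simp only [psiIter, map_add]
    exact psiIter_add ψ m _ _

private lemma psiIter_semilinear {p e : ℕ} {A : Type*} [CommRing A] (ψ : A →+ A)
    (hψ : ∀ r x : A, ψ (r ^ p ^ e * x) = r * ψ x) :
    ∀ (m : ℕ) (r x : A), psiIter ψ m (r ^ p ^ (e * m) * x) = r * psiIter ψ m x
  | 0, r, x => by simp [psiIter]
  | m + 1, r, x => by
    have h1 : r ^ p ^ (e * (m + 1)) = (r ^ p ^ (e * m)) ^ p ^ e := by
      rw [← pow_mul, ← pow_add, Nat.mul_succ]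
    simp only [psiIter, h1]
    rw [hψ (r ^ p ^ (e * m)) x]
    exact psiIter_semilinear ψ hψ m r (ψ x)

private lemma psiIter_split {p e : ℕ} {A : Type*} [CommRing A] (ψ : A →+ A) (c : A)
    (hsplit : ∀ a : A, ψ (c * a ^ p ^ e) = a) :
    ∀ (m : ℕ) (a : A), psiIter ψ m (c ^ sExp (p ^ e) m * a ^ p ^ (e * m)) = a
  | 0, a => by simp [psiIter, sExp]
  | m + 1, a => by
    have key : c ^ sExp (p ^ e) (m + 1) * a ^ p ^ (e * (m + 1)) =
        c * (c ^ sExp (p ^ e) m * a ^ p ^ (e * m)) ^ p ^ e := by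
      rw [mul_pow, ← pow_mul, ← pow_mul, ← pow_add, Nat.mul_succ]
      show c ^ (1 + p ^ e * sExp (p ^ e) m) * _ = _
      rw [pow_add, pow_one, mul_assoc, Nat.mul_comm (sExp (p ^ e) m) (p ^ e)]
    simp only [psiIter, key]
    rw [hsplit (c ^ sExp (p ^ e) m * a ^ p ^ (e * m))]
    exact psiIter_split ψ c hsplit m a

private lemma le_sExp {q : ℕ} (hq : 1 ≤ q) : ∀ m, m ≤ sExp q m
  | 0 => le_refl 0
  | m + 1 => by
    have h1 := le_sExp hq m
    have h2 : sExp q m ≤ q * sExp q m := Nat.le_mul_of_pos_left _ hq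
    show m + 1 ≤ 1 + q * sExp q m
    omega

/-- If `f : A →+* A` is a finite ring map and `P : ℕ → A → Prop` is a monotone family of
predicates, each of which cuts out a submodule for the module structure restricted along
`f`, and each element satisfies some `P n`, then there is a uniform `N`. -/
private lemma exists_uniform_bound {A : Type*} [CommRing A] (f : A →+* A) (hf : f.Finite)
    (P : ℕ → A → Prop)
    (Pmono : ∀ n x, P n x → P (n + 1) x)
    (Pzero : ∀ n, P n 0)
    (Padd : ∀ n x y, P n x → P n y → P n (x + y))
    (Psmul : ∀ n r x, P n x → P n (f r * x))
    (Pex : ∀ x, ∃ n, P n x) :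
    ∃ N, ∀ x, P N x := by
  have hmono : ∀ n m, n ≤ m → ∀ x, P n x → P m x := by
    intro n m h
    induction m, h using Nat.le_induction with
    | base => exact fun x hx => hx
    | succ m _ ih => exact fun x hx => Pmono m x (ih x hx)
  letI : Algebra A A := f.toAlgebra
  letI : Module A A := Algebra.toModule
  haveI hM : Module.Finite A A := hf
  obtain ⟨s, hs⟩ := hM.fg_top
  choose ν hν using Pex
  refine ⟨s.sup ν, fun x => ?_⟩
  let M : Submodule A A :=
    { carrier := {x | P (s.sup ν) x}
      add_mem' := fun hx hy => Padd _ _ _ hx hy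
      zero_mem' := Pzero _
      smul_mem' := fun r x hx => by
        rw [Set.mem_setOf_eq]
        rw [Algebra.smul_def, RingHom.algebraMap_toAlgebra]
        exact Psmul _ _ _ hx }
  have hle : (⊤ : Submodule A A) ≤ M := by
    rw [← hs]
    exact Submodule.span_le.mpr fun g hg => hmono _ _ (Finset.le_sup hg) g (hν g)
  exact hle Submodule.mem_top

end Aux

/-- Smith's criterion: if `A[1/c]` is strongly F-regular and the map
`a ↦ c * a ^ p ^ e` splits for some `e`, then `A` is strongly F-regular. -/
theorem stronglyFRegular_of_splitting_and_localization (p : ℕ) [Fact p.Prime]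
    (A : Type*) [CommRing A] [IsDomain A] [CharP A p] [IsNoetherianRing A]
    (hFF : IsFFinite p A) (c : A) (hc : c ≠ 0)
    (hloc : IsStronglyFRegular p (Localization.Away c))
    (e : ℕ) (ψ : A →+ A)
    (hψ : ∀ r x : A, ψ (r ^ p ^ e * x) = r * ψ x)
    (hsplit : ∀ a : A, ψ (c * a ^ p ^ e) = a) :
    IsStronglyFRegular p A := by
  intro d hd
  have hd0 : d ≠ 0 := fun h => one_ne_zero (hd 1 (by rw [h, zero_mul]))
  have hple : Submonoid.powers c ≤ nonZeroDivisors A :=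
    powers_le_nonZeroDivisors_of_noZeroDivisors hc
  have hinj : Function.Injective (algebraMap A (Localization.Away c)) :=
    IsLocalization.injective _ hple
  haveI : IsDomain (Localization.Away c) :=
    IsLocalization.isDomain_of_le_nonZeroDivisors (S := Localization.Away c) hple
  -- `d` maps to a non-zerodivisor in the localization
  have hdL : ∀ x : Localization.Away c, algebraMap A (Localization.Away c) d * x = 0 → x = 0 := by
    intro x hx
    rcases mul_eq_zero.mp hx with h | h
    · exact absurd (hinj (h.trans (map_zero _).symm)) hd0
    · exact h
  obtain ⟨e₁, φ, hφ1, hφ2⟩ := hloc _ hdL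
  -- iterated Frobenius is finite
  have hiter : ∀ n, (iterateFrobenius A p n).Finite := by
    intro n
    induction n with
    | zero => rw [iterateFrobenius_zero]; exact RingHom.Finite.id A
    | succ n ih =>
      have h1 : iterateFrobenius A p (n + 1) =
          (iterateFrobenius A p n).comp (frobenius A p) := by
        rw [← iterateFrobenius_one A p, ← iterateFrobenius_add]
      rw [h1]
      exact ih.comp hFF
  set θ : A → Localization.Away c := fun x => φ (algebraMap A (Localization.Away c) x) with hθ
  have hθadd : ∀ x y, θ (x + y) = θ x + θ y := fun x y => by
    simp only [hθ, map_add]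
  have hθsemi : ∀ r x, θ (r ^ p ^ e₁ * x) = algebraMap A (Localization.Away c) r * θ x := by
    intro r x
    simp only [hθ, map_mul, map_pow]
    exact hφ1 _ _
  -- uniform denominator bound
  obtain ⟨N, hN⟩ := exists_uniform_bound (iterateFrobenius A p e₁) (hiter e₁)
    (fun n x => ∃ a : A,
      algebraMap A (Localization.Away c) c ^ n * θ x = algebraMap A (Localization.Away c) a)
    (by
      rintro n x ⟨a, ha⟩
      refine ⟨c * a, ?_⟩
      have h1 : algebraMap A (Localization.Away c) c ^ (n + 1) * θ x =
          algebraMap A (Localization.Away c) c *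
            (algebraMap A (Localization.Away c) c ^ n * θ x) := by ring
      rw [h1, ha, ← map_mul])
    (fun n => ⟨0, by simp [hθ]⟩)
    (by
      rintro n x y ⟨a, ha⟩ ⟨b, hb⟩
      exact ⟨a + b, by rw [hθadd, mul_add, ha, hb, ← map_add]⟩)
    (by
      rintro n r x ⟨a, ha⟩
      refine ⟨r * a, ?_⟩
      have h1 : iterateFrobenius A p e₁ r * x = r ^ p ^ e₁ * x := rfl
      rw [h1, hθsemi, mul_left_comm, ha, ← map_mul])
    (by
      intro x
      obtain ⟨⟨a, s⟩, hs⟩ := IsLocalization.surj (Submonoid.powers c) (θ x)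
      obtain ⟨n, hn⟩ := s.2
      have hn' : c ^ n = (s : A) := hn
      exact ⟨n, a, by rw [← map_pow, hn', mul_comm]; exact hs⟩)
  choose η hη using hN
  have hηadd : ∀ x y, η (x + y) = η x + η y := fun x y => hinj (by
    rw [← hη, hθadd, mul_add, hη, hη, map_add])
  have hηsemi : ∀ r x, η (r ^ p ^ e₁ * x) = r * η x := fun r x => hinj (by
    rw [← hη, hθsemi, mul_left_comm, hη, ← map_mul])
  have hηsplit : ∀ a, η (d * a ^ p ^ e₁) = c ^ N * a := by
    intro a
    apply hinj
    rw [← hη]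
    have h1 : θ (d * a ^ p ^ e₁) = algebraMap A (Localization.Away c) a := by
      simp only [hθ, map_mul, map_pow]
      exact hφ2 _
    rw [h1, ← map_pow, ← map_mul]
  -- assemble the splitting for `d`
  have hq1 : 1 ≤ p ^ e := Nat.one_le_pow _ _ (Nat.Prime.pos Fact.out)
  have hNs : N ≤ sExp (p ^ e) N := le_sExp hq1 N
  set t : ℕ := sExp (p ^ e) N - N with ht
  have htN : t + N = sExp (p ^ e) N := Nat.sub_add_cancel hNs
  refine ⟨e₁ + e * N,
    AddMonoidHom.mk' (fun x => psiIter ψ N (c ^ t * η x)) ?_, ?_, ?_⟩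
  · intro x y
    rw [hηadd, mul_add, psiIter_add]
  · intro r x
    simp only [AddMonoidHom.mk'_apply]
    have h1 : r ^ p ^ (e₁ + e * N) = (r ^ p ^ (e * N)) ^ p ^ e₁ := by
      rw [← pow_mul, ← pow_add, Nat.add_comm e₁ (e * N)]
    rw [h1, hηsemi, mul_left_comm]
    exact psiIter_semilinear ψ hψ N r (c ^ t * η x)
  · intro a
    simp only [AddMonoidHom.mk'_apply]
    have h1 : a ^ p ^ (e₁ + e * N) = (a ^ p ^ (e * N)) ^ p ^ e₁ := by
      rw [← pow_mul, ← pow_add, Nat.add_comm e₁ (e * N)]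
    rw [h1, hηsplit, ← mul_assoc, ← pow_add, htN]
    exact psiIter_split ψ c hsplit N a
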